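/- The overall Ego Cluster loss rate, defined as the simple average of per-ego loss rates across all N_c + N_t egos, is minimized over all alter assignments... specifically: for each alter k, if w_T(k) ≥ w_C(k) assign k to T else to C; under the assumption that each alter's edges contribute monotonically to per-ego loss rates with fixed denominators, any deviation from the greedy assignment for some alter k with w_T(k) ≠ w_C(k) strictly increases the average loss rate. -/

import Mathlib

open Finset

/-- Egos `ι` are partitioned into groups by `grp : ι → Bool`
(`true` = treatment), alters are `K`, with nonnegative edge weights `e k i`.
Each ego's total edge weight `D i` is fixed and all equal to `d > 0` (so the
greedy rule and the ego-weighted rule coincide). The per-ego loss rate of ego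
`i` under assignment `σ` is `(∑ over alters k assigned to the other group of
e k i)/D i`, and the average loss rate is the simple average over all egos.
The greedy assignment `gr` sets `gr k = true` iff `wC k ≤ wT k`, where
`wT k, wC k` are k's total weights to treatment/control egos. Claim: any
assignment `σ` deviating from the greedy one at some alter `k` with
`wT k ≠ wC k` has strictly larger average loss rate. -/
theorem stmt9 {K ι : Type*} [Fintype K] [Fintype ι] [Nonempty ι]
    (grp : ι → Bool)
    (e : K → ι → ℝ) (he : ∀ k i, 0 ≤ e k i)
    (d : ℝ) (hd : 0 < d) (D : ι → ℝ) (hD : ∀ i, D i = d)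
    (wT wC : K → ℝ)
    (hwT : ∀ k, wT k = ∑ i ∈ Finset.univ.filter (fun i => grp i = true), e k i)
    (hwC : ∀ k, wC k = ∑ i ∈ Finset.univ.filter (fun i => grp i = false), e k i)
    (gr : K → Bool) (hgr : ∀ k, gr k = true ↔ wC k ≤ wT k)
    (avg : (K → Bool) → ℝ)
    (havg : ∀ σ, avg σ =
      (∑ i, (∑ k, if σ k ≠ grp i then e k i else 0) / D i) / (Fintype.card ι : ℝ))
    (σ : K → Bool) (hdev : ∃ k, σ k ≠ gr k ∧ wT k ≠ wC k) :
    avg gr < avg σ := by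
  classical
  have key : ∀ τ : K → Bool, avg τ =
      (∑ k, (if τ k = true then wC k else wT k)) / d / (Fintype.card ι : ℝ) := by
    intro τ
    rw [havg]
    congr 1
    have h1 : ∀ i : ι, (∑ k, if τ k ≠ grp i then e k i else 0) / D i
        = (∑ k, if τ k ≠ grp i then e k i else 0) / d := by
      intro i; rw [hD]
    simp_rw [h1, ← Finset.sum_div]
    congr 1
    rw [Finset.sum_comm]
    refine Finset.sum_congr rfl fun k _ => ?_
    by_cases h : τ k = true
    · simp only [h, if_true, hwC, Finset.sum_filter]
      refine Finset.sum_congr rfl fun i _ => ?_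
      by_cases hg : grp i = false
      · simp [hg, h]
      · simp [hg, h, Bool.eq_true_of_not_eq_false hg]
    · have h' : τ k = false := Bool.not_eq_true _ |>.mp h
      simp only [h', if_false, hwT, Finset.sum_filter]
      refine Finset.sum_congr rfl fun i _ => ?_
      by_cases hg : grp i = true
      · simp [hg, h']
      · simp [hg, h', Bool.not_eq_true _ |>.mp hg]
  rw [key gr, key σ]
  have hn : (0:ℝ) < (Fintype.card ι : ℝ) := by exact_mod_cast Fintype.card_pos
  refine div_lt_div_of_pos_right (div_lt_div_of_pos_right ?_ hd) hn
  obtain ⟨k0, hk0, hne⟩ := hdev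
  refine Finset.sum_lt_sum (fun k _ => ?_) ⟨k0, Finset.mem_univ _, ?_⟩
  · by_cases hs : σ k = gr k
    · rw [hs]
    · by_cases hg : gr k = true
      · have : wC k ≤ wT k := (hgr k).mp hg
        have hs' : σ k = false := by
          cases hσ : σ k
          · rfl
          · exact absurd (hσ.trans hg.symm) hs
        simp [hg, hs', this]
      · have h2 : ¬ wC k ≤ wT k := fun h => hg ((hgr k).mpr h)
        have hg' : gr k = false := Bool.not_eq_true _ |>.mp hg
        have hs' : σ k = true := by
          cases hσ : σ k
          · exact absurd (hσ.trans hg'.symm) hs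
          · rfl
        simp [hg', hs']
        exact le_of_lt (lt_of_not_ge h2)
  · by_cases hg : gr k0 = true
    · have hle : wC k0 ≤ wT k0 := (hgr k0).mp hg
      have hs' : σ k0 = false := by
        cases hσ : σ k0
        · rfl
        · exact absurd (hσ.trans hg.symm) hk0
      simp [hg, hs']
      exact lt_of_le_of_ne hle (Ne.symm hne)
    · have h2 : ¬ wC k0 ≤ wT k0 := fun h => hg ((hgr k0).mpr h)
      have hg' : gr k0 = false := Bool.not_eq_true _ |>.mp hg
      have hs' : σ k0 = true := by
        cases hσ : σ k0
        · exact absurd (hσ.trans hg'.symm) hk0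
        · rfl
      simp [hg', hs']
      exact lt_of_not_ge h2
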